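/- Let φ : ℝ → ℝ be differentiable on [0,∞) with φ(0) = 0 and 0 < v·φ'(v) ≤ φ(v) for every v > 0, and let θ > 0 satisfy φ'(0) ≤ (μ + σ)/(λ(θΛ/μ + Λ/σ)). Then for all u ≥ 0 and v > 0: λ(θΛ/μ + Λ/σ)·u·φ(v) ≤ (μ + σ)·u·v. Consequently, for all u ≥ 0, v > 0, λ(θΛ/μ + Λ/σ)uφ(v) - (σ + μ)uv - μθ(u - Λ/μ)² - σv² ≤ 0. -/

import Mathlib

/-- If `φ` is differentiable on `[0,∞)` with `φ 0 = 0` and `0 < vφ'(v) ≤ φ v` for `v > 0`,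
and `θ > 0` satisfies `φ'(0) ≤ (μ + σ)/(λ(θΛ/μ + Λ/σ))`, then for all `u ≥ 0` and `v > 0`:
`λ(θΛ/μ + Λ/σ) u φ(v) ≤ (μ + σ) u v`, and consequently
`λ(θΛ/μ + Λ/σ) u φ(v) - (σ + μ) u v - μθ(u - Λ/μ)² - σv² ≤ 0`. -/
theorem stmt_19 (φ : ℝ → ℝ) (Λ μ σ lam θ : ℝ)
    (hΛ : 0 < Λ) (hμ : 0 < μ) (hσ : 0 < σ) (hlam : 0 < lam) (hθ : 0 < θ)
    (hdiff : ∀ v ∈ Set.Ici (0:ℝ), DifferentiableAt ℝ φ v)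
    (hφ0 : φ 0 = 0)
    (hinc : ∀ v : ℝ, 0 < v → 0 < v * deriv φ v ∧ v * deriv φ v ≤ φ v)
    (hcond : deriv φ 0 ≤ (μ + σ) / (lam * (θ * Λ / μ + Λ / σ))) :
    ∀ u v : ℝ, 0 ≤ u → 0 < v →
      lam * (θ * Λ / μ + Λ / σ) * u * φ v ≤ (μ + σ) * u * v ∧
      lam * (θ * Λ / μ + Λ / σ) * u * φ v - (σ + μ) * (u * v)
        - μ * θ * (u - Λ / μ) ^ 2 - σ * v ^ 2 ≤ 0 := by
  set K : ℝ := θ * Λ / μ + Λ / σ with hK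
  have hKpos : 0 < K := by positivity
  clear_value K
  set g : ℝ → ℝ := fun v => φ v / v with hg
  -- g is antitone on (0,∞)
  have hanti : AntitoneOn g (Set.Ioi 0) := by
    apply antitoneOn_of_deriv_nonpos (convex_Ioi 0)
    · apply ContinuousOn.div
      · exact fun x hx => ((hdiff x (Set.mem_Ici.mpr (le_of_lt (Set.mem_Ioi.mp hx)))).continuousAt).continuousWithinAt
      · exact continuousOn_id
      · exact fun x hx => ne_of_gt hx
    · intro x hx
      rw [interior_Ioi] at hx
      exact ((hdiff x (Set.mem_Ici.mpr (le_of_lt (Set.mem_Ioi.mp hx)))).div differentiableAt_id (ne_of_gt hx)).differentiableWithinAt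
    · intro x hx
      rw [interior_Ioi] at hx
      have hx0 : (0:ℝ) < x := hx
      have hd : HasDerivAt g ((deriv φ x * x - φ x * 1) / x ^ 2) x :=
        ((hdiff x hx0.le).hasDerivAt).div (hasDerivAt_id x) (ne_of_gt hx0)
      rw [hd.deriv]
      have h2 := (hinc x hx0).2
      have : deriv φ x * x - φ x * 1 ≤ 0 := by nlinarith
      exact div_nonpos_of_nonpos_of_nonneg this (sq_nonneg x)
  -- slope tends to deriv φ 0
  have hslope : Filter.Tendsto g (nhdsWithin 0 (Set.Ioi 0)) (nhds (deriv φ 0)) := by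
    have h0 : HasDerivAt φ (deriv φ 0) 0 := (hdiff 0 (Set.mem_Ici.mpr le_rfl)).hasDerivAt
    have := hasDerivAt_iff_tendsto_slope.mp h0
    have h := this.mono_left (nhdsWithin_mono 0 (fun x hx => ne_of_gt hx))
    refine h.congr' ?_
    filter_upwards [self_mem_nhdsWithin] with w hw
    simp [slope, hφ0, hg, div_eq_inv_mul]
  -- key: φ v ≤ deriv φ 0 * v for v > 0
  have key : ∀ v : ℝ, 0 < v → φ v ≤ deriv φ 0 * v := by
    intro v hv
    have hgle : g v ≤ deriv φ 0 := by
      refine ge_of_tendsto hslope ?_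
      filter_upwards [Ioc_mem_nhdsGT_of_mem (Set.left_mem_Ico.mpr hv)] with w hw
      exact hanti hw.1 hv hw.2
    have : φ v / v ≤ deriv φ 0 := hgle
    calc φ v = (φ v / v) * v := by field_simp
    _ ≤ deriv φ 0 * v := by nlinarith
  intro u v hu hv
  have h1 : lam * K * u * φ v ≤ (μ + σ) * u * v := by
    have hφle : φ v ≤ (μ + σ) / (lam * K) * v := by
      calc φ v ≤ deriv φ 0 * v := key v hv
      _ ≤ (μ + σ) / (lam * K) * v := by nlinarith
    have hc : 0 ≤ lam * K * u := by positivity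
    calc lam * K * u * φ v ≤ lam * K * u * ((μ + σ) / (lam * K) * v) :=
      mul_le_mul_of_nonneg_left hφle hc
    _ = (μ + σ) * u * v := by field_simp
  refine ⟨h1, ?_⟩
  have h2 : (μ + σ) * u * v = (σ + μ) * (u * v) := by ring
  linarith [mul_nonneg (mul_nonneg hμ.le hθ.le) (sq_nonneg (u - Λ / μ)), mul_nonneg hσ.le (sq_nonneg v)]
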